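/- Let n ≥ k ≥ 2 be positive integers. Then n ≥ R(k) holds if and only if Σ_{G,H} (-1)^{|E(H)|} cos( −(π(n−2)!/(k!(n−k)!)) · (2|E(G)| − C(n,2)) + (4π/(k(k−1))) · i(G,H) ) = 0, where the summation is over all simple graphs G on the vertex set [n] and all k-uniform hypergraphs H on the vertex set [n]. -/

import Mathlib

open Finset

lemma ramsey_exists (s t : ℕ) : ∃ N : ℕ, ∀ (V : Type) (G : SimpleGraph V) (A : Finset V),
    N ≤ A.card → (∃ B ⊆ A, G.IsNClique s B) ∨ (∃ B ⊆ A, Gᶜ.IsNClique t B) := by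
  induction s generalizing t with
  | zero =>
    exact ⟨0, fun V G A _ => Or.inl ⟨∅, empty_subset _, by simp [SimpleGraph.isNClique_empty]⟩⟩
  | succ s ih =>
    induction t with
    | zero =>
      exact ⟨0, fun V G A _ => Or.inr ⟨∅, empty_subset _, by simp [SimpleGraph.isNClique_empty]⟩⟩
    | succ t iht =>
      obtain ⟨N1, h1⟩ := ih (t + 1)
      obtain ⟨N2, h2⟩ := iht
      refine ⟨N1 + N2 + 1, ?_⟩
      intro V G A hA
      classical
      obtain ⟨a, ha⟩ := card_pos.mp (by omega : 0 < A.card)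
      set A' := A.erase a with hA'
      have hcard : N1 + N2 ≤ A'.card := by
        rw [hA', card_erase_of_mem ha]; omega
      have hsplit : (A'.filter (fun b => G.Adj a b)).card
          + (A'.filter (fun b => ¬ G.Adj a b)).card = A'.card :=
        card_filter_add_card_filter_not _
      rcases (by omega : N1 ≤ (A'.filter (fun b => G.Adj a b)).card
          ∨ N2 ≤ (A'.filter (fun b => ¬ G.Adj a b)).card) with hP | hQ
      · rcases h1 V G _ hP with ⟨B, hB, hBc⟩ | ⟨B, hB, hBc⟩
        · refine Or.inl ⟨insert a B, ?_, hBc.insert fun b hb => (mem_filter.mp (hB hb)).2⟩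
          exact insert_subset ha (hB.trans ((filter_subset _ _).trans (erase_subset _ _)))
        · exact Or.inr ⟨B, hB.trans ((filter_subset _ _).trans (erase_subset _ _)), hBc⟩
      · rcases h2 V G _ hQ with ⟨B, hB, hBc⟩ | ⟨B, hB, hBc⟩
        · exact Or.inl ⟨B, hB.trans ((filter_subset _ _).trans (erase_subset _ _)), hBc⟩
        · refine Or.inr ⟨insert a B, ?_, hBc.insert fun b hb => ?_⟩
          · exact insert_subset ha (hB.trans ((filter_subset _ _).trans (erase_subset _ _)))
          · have hb' := mem_filter.mp (hB hb)
            exact (SimpleGraph.compl_adj _ _ _).mpr ⟨fun h => (mem_erase.mp hb'.1).1 h.symm, hb'.2⟩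

def RamProp (n k : ℕ) : Prop := ∀ G : SimpleGraph (Fin n),
    (∃ s : Finset (Fin n), G.IsNClique k s) ∨ (∃ s : Finset (Fin n), Gᶜ.IsNClique k s)

lemma ramsey_mono {k m n : ℕ} (h : m ≤ n) (hm : RamProp m k) : RamProp n k := by
  intro G
  set f : Fin m ↪ Fin n := Fin.castLEEmb h with hf
  have hadj : ∀ a b, (G.comap f).Adj a b ↔ G.Adj (f a) (f b) := fun a b => Iff.rfl
  rcases hm (G.comap f) with ⟨s, hs⟩ | ⟨s, hs⟩
  · refine Or.inl ⟨s.map f, ?_, by rw [card_map, hs.2]⟩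
    intro x hx y hy hxy
    obtain ⟨a, ha, rfl⟩ := mem_map.mp hx
    obtain ⟨b, hb, rfl⟩ := mem_map.mp hy
    exact hs.1 ha hb (fun e => hxy (by rw [e]))
  · refine Or.inr ⟨s.map f, ?_, by rw [card_map, hs.2]⟩
    intro x hx y hy hxy
    obtain ⟨a, ha, rfl⟩ := mem_map.mp hx
    obtain ⟨b, hb, rfl⟩ := mem_map.mp hy
    have := hs.1 ha hb (fun e => hxy (by rw [e]))
    rw [SimpleGraph.compl_adj] at this ⊢
    exact ⟨hxy, this.2⟩

/-- The k-th diagonal Ramsey number. -/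
noncomputable def diagonalRamsey (k : ℕ) : ℕ :=
  sInf {n : ℕ | 0 < n ∧ ∀ G : SimpleGraph (Fin n),
    (∃ s : Finset (Fin n), G.IsNClique k s) ∨ (∃ s : Finset (Fin n), Gᶜ.IsNClique k s)}

lemma diagonalRamsey_le_iff {k n : ℕ} (hn : 1 ≤ n) :
    diagonalRamsey k ≤ n ↔ RamProp n k := by
  constructor
  · intro h
    obtain ⟨N, hN⟩ := ramsey_exists k k
    have hmem : (N + 1) ∈ {n : ℕ | 0 < n ∧ RamProp n k} := by
      refine ⟨Nat.succ_pos N, fun G => ?_⟩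
      rcases hN (Fin (N + 1)) G univ (by simp) with ⟨B, _, hB⟩ | ⟨B, _, hB⟩
      · exact Or.inl ⟨B, hB⟩
      · exact Or.inr ⟨B, hB⟩
    have hmem' := Nat.sInf_mem ⟨N + 1, hmem⟩
    exact ramsey_mono h hmem'.2
  · intro h
    exact Nat.sInf_le ⟨hn, h⟩

lemma ramProp_iff_bad (n k : ℕ) (hk : 2 ≤ k) :
    RamProp n k ↔ ∀ W ⊆ powersetCard 2 (univ : Finset (Fin n)),
      ∃ v ∈ powersetCard k (univ : Finset (Fin n)),
        (W.filter (· ⊆ v)).card = 0 ∨ (W.filter (· ⊆ v)).card = k.choose 2 := by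
  constructor
  · intro hR W hW
    classical
    let G : SimpleGraph (Fin n) :=
      { Adj := fun a b => a ≠ b ∧ {a, b} ∈ W
        symm := ⟨by rintro a b ⟨h1, h2⟩; exact ⟨h1.symm, by rwa [Finset.pair_comm]⟩⟩
        loopless := ⟨fun a h => h.1 rfl⟩ }
    rcases hR G with ⟨s, hs⟩ | ⟨s, hs⟩
    · refine ⟨s, Finset.mem_powersetCard_univ.mpr hs.2, Or.inr ?_⟩
      have hfe : W.filter (· ⊆ s) = powersetCard 2 s := by
        ext u
        simp only [mem_filter, mem_powersetCard]
        constructor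
        · rintro ⟨hu, hus⟩
          exact ⟨hus, (Finset.mem_powersetCard.mp (hW hu)).2⟩
        · rintro ⟨hus, hcard⟩
          obtain ⟨a, b, hab, rfl⟩ := Finset.card_eq_two.mp hcard
          have ha : a ∈ s := hus (by simp)
          have hb : b ∈ s := hus (by simp)
          exact ⟨(hs.1 ha hb hab).2, hus⟩
      rw [hfe, Finset.card_powersetCard, hs.2]
    · refine ⟨s, Finset.mem_powersetCard_univ.mpr hs.2, Or.inl ?_⟩
      rw [Finset.card_eq_zero, Finset.filter_eq_empty_iff]
      rintro u hu hus
      obtain ⟨a, b, hab, rfl⟩ := Finset.card_eq_two.mp (Finset.mem_powersetCard.mp (hW hu)).2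
      have ha : a ∈ s := hus (by simp)
      have hb : b ∈ s := hus (by simp)
      have := hs.1 ha hb hab
      rw [SimpleGraph.compl_adj] at this
      exact this.2 ⟨hab, hu⟩
  · intro hB G
    classical
    set W := (powersetCard 2 (univ : Finset (Fin n))).filter
        (fun u => ∀ a ∈ u, ∀ b ∈ u, a ≠ b → G.Adj a b) with hWdef
    have hpair : ∀ a b : Fin n, a ≠ b → (({a, b} : Finset (Fin n)) ∈ W ↔ G.Adj a b) := by
      intro a b hab
      constructor
      · intro h
        exact (mem_filter.mp h).2 a (by simp) b (by simp) hab
      · intro h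
        refine mem_filter.mpr ⟨Finset.mem_powersetCard_univ.mpr (Finset.card_pair hab), ?_⟩
        intro x hx y hy hxy
        rcases Finset.mem_insert.mp hx with rfl | hx'
        · rcases Finset.mem_insert.mp hy with rfl | hy'
          · exact absurd rfl hxy
          · obtain rfl := Finset.mem_singleton.mp hy'
            exact h
        · obtain rfl := Finset.mem_singleton.mp hx'
          rcases Finset.mem_insert.mp hy with rfl | hy'
          · exact h.symm
          · obtain rfl := Finset.mem_singleton.mp hy'
            exact absurd rfl hxy
    obtain ⟨v, hv, hcase⟩ := hB W (filter_subset _ _)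
    have hvcard : v.card = k := Finset.mem_powersetCard_univ.mp hv
    rcases hcase with h0 | hfull
    · refine Or.inr ⟨v, ?_, hvcard⟩
      intro a ha b hb hab
      rw [SimpleGraph.compl_adj]
      refine ⟨hab, fun hadj => ?_⟩
      have hmem : ({a, b} : Finset (Fin n)) ∈ W.filter (· ⊆ v) := by
        refine mem_filter.mpr ⟨(hpair a b hab).mpr hadj, ?_⟩
        exact Finset.insert_subset ha (Finset.singleton_subset_iff.mpr hb)
      rw [Finset.card_eq_zero] at h0
      simp [h0] at hmem
    · refine Or.inl ⟨v, ?_, hvcard⟩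
      have hsub : W.filter (· ⊆ v) ⊆ powersetCard 2 v := by
        intro u hu
        have hu' := mem_filter.mp hu
        exact Finset.mem_powersetCard.mpr ⟨hu'.2,
          (Finset.mem_powersetCard.mp (mem_filter.mp hu'.1).1).2⟩
      have heq : W.filter (· ⊆ v) = powersetCard 2 v := by
        apply Finset.eq_of_subset_of_card_le hsub
        rw [Finset.card_powersetCard, hvcard, hfull]
      intro a ha b hb hab
      have hmem : ({a, b} : Finset (Fin n)) ∈ powersetCard 2 v :=
        Finset.mem_powersetCard.mpr
          ⟨Finset.insert_subset ha (Finset.singleton_subset_iff.mpr hb), Finset.card_pair hab⟩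
      rw [← heq] at hmem
      exact (hpair a b hab).mp (mem_filter.mp hmem).1

section
variable {n k : ℕ}

lemma cardA (W U : Finset (Finset (Fin n))) :
    ((W ×ˢ U).filter fun p => p.1 ⊆ p.2).card = ∑ v ∈ U, (W.filter (· ⊆ v)).card := by
  classical
  rw [Finset.card_filter, Finset.sum_product_right]
  exact Finset.sum_congr rfl fun v _ => (Finset.card_filter _ _).symm

lemma cardB (hk : 2 ≤ k) (hkn : k ≤ n) (u : Finset (Fin n)) (hu : u.card = 2) :
    ((powersetCard k (univ : Finset (Fin n))).filter (fun v => u ⊆ v)).card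
      = (n - 2).choose (k - 2) := by
  classical
  have hcard : ((powersetCard k (univ : Finset (Fin n))).filter (fun v => u ⊆ v)).card
      = (powersetCard (k - 2) ((univ : Finset (Fin n)) \ u)).card := by
    apply Finset.card_bij' (fun v _ => v \ u) (fun w _ => w ∪ u)
    · intro v hv
      have hv' := Finset.mem_filter.mp hv
      have hvk := (Finset.mem_powersetCard.mp hv'.1).2
      refine Finset.mem_powersetCard.mpr ⟨Finset.sdiff_subset_sdiff (Finset.subset_univ _) le_rfl, ?_⟩
      rw [Finset.card_sdiff_of_subset hv'.2, hvk, hu]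
    · intro w hw
      have hw' := Finset.mem_powersetCard.mp hw
      have hdisj : Disjoint w u := by
        refine Finset.disjoint_left.mpr fun x hx hxu => ?_
        have := hw'.1 hx
        simp [Finset.mem_sdiff] at this
        exact this hxu
      refine Finset.mem_filter.mpr ⟨Finset.mem_powersetCard_univ.mpr ?_, Finset.subset_union_right⟩
      rw [Finset.card_union_of_disjoint hdisj, hw'.2, hu]
      omega
    · intro v hv
      exact Finset.sdiff_union_of_subset (Finset.mem_filter.mp hv).2
    · intro w hw
      have hw' := Finset.mem_powersetCard.mp hw
      have hdisj : Disjoint w u := by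
        refine Finset.disjoint_left.mpr fun x hx hxu => ?_
        have := hw'.1 hx
        simp [Finset.mem_sdiff] at this
        exact this hxu
      exact Finset.union_sdiff_cancel_right hdisj
  rw [hcard, Finset.card_powersetCard, Finset.card_sdiff_of_subset (Finset.subset_univ _), hu]
  simp

lemma cardC (hk : 2 ≤ k) (hkn : k ≤ n) (W : Finset (Finset (Fin n)))
    (hW : W ⊆ powersetCard 2 (univ : Finset (Fin n))) :
    ∑ v ∈ powersetCard k (univ : Finset (Fin n)), (W.filter (· ⊆ v)).card
      = W.card * (n - 2).choose (k - 2) := by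
  classical
  have : ∀ v ∈ powersetCard k (univ : Finset (Fin n)),
      (W.filter (· ⊆ v)).card = ∑ u ∈ W, if u ⊆ v then 1 else 0 := by
    intro v _; rw [Finset.card_filter]
  rw [Finset.sum_congr rfl this, Finset.sum_comm]
  rw [Finset.sum_congr rfl (fun u hu => ?_), Finset.sum_const, smul_eq_mul]
  rw [← Finset.card_filter]
  exact cardB hk hkn u (Finset.mem_powersetCard.mp (hW hu)).2
end

lemma key1 {n k : ℕ} (hk : 2 ≤ k) (hkn : k ≤ n) :
    2 * π / ((k : ℝ) * ((k : ℝ) - 1)) * ((n - 2).choose (k - 2) : ℝ)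
      = 2 * (π * ((n - 2).factorial : ℝ) / ((k.factorial : ℝ) * ((n - k).factorial : ℝ))) := by
  obtain ⟨j, rfl⟩ : ∃ j, k = j + 2 := ⟨k - 2, by omega⟩
  obtain ⟨m, rfl⟩ : ∃ m, n = m + 2 := ⟨n - 2, by omega⟩
  have hjm : j ≤ m := by omega
  have hnk : m + 2 - (j + 2) = m - j := by omega
  have hchoose : (m.choose j : ℝ) * (j.factorial : ℝ) * ((m - j).factorial : ℝ)
      = (m.factorial : ℝ) := by
    exact_mod_cast congrArg (Nat.cast : ℕ → ℝ)
      (Nat.choose_mul_factorial_mul_factorial hjm)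
  have hfac : ((j + 2).factorial : ℝ) = ((j : ℝ) + 2) * ((j : ℝ) + 1) * (j.factorial : ℝ) := by
    push_cast [Nat.factorial_succ (j + 1), Nat.factorial_succ j]
    ring
  have h1 : ((j:ℝ) + 2) * ((j:ℝ) + 2 - 1) ≠ 0 := by
    have he : ((j:ℝ) + 2) * ((j:ℝ) + 2 - 1) = ((j:ℝ) + 2) * ((j:ℝ) + 1) := by ring
    rw [he]; positivity
  have h2 : (j.factorial : ℝ) ≠ 0 := by positivity
  have h3 : ((m - j).factorial : ℝ) ≠ 0 := by positivity
  simp only [show m + 2 - 2 = m from rfl, show j + 2 - 2 = j from rfl, hnk]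
  push_cast
  rw [hfac]
  rw [← hchoose, show ((j:ℝ) + 2 - 1) = (j:ℝ) + 1 by ring]
  field_simp

lemma key2 {n k : ℕ} (hk : 2 ≤ k) (hkn : k ≤ n) :
    π * ((n - 2).factorial : ℝ) / ((k.factorial : ℝ) * ((n - k).factorial : ℝ))
        * (n.choose 2 : ℝ)
      = π * (n.choose k : ℝ) / 2 := by
  obtain ⟨j, rfl⟩ : ∃ j, k = j + 2 := ⟨k - 2, by omega⟩
  obtain ⟨m, rfl⟩ : ∃ m, n = m + 2 := ⟨n - 2, by omega⟩
  have hjm : j ≤ m := by omega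
  have hnk : m + 2 - (j + 2) = m - j := by omega
  have hchoose : ((m + 2).choose (j + 2) : ℝ) * ((j + 2).factorial : ℝ)
      * ((m - j).factorial : ℝ) = ((m + 2).factorial : ℝ) := by
    have := Nat.choose_mul_factorial_mul_factorial (show j + 2 ≤ m + 2 by omega)
    rw [hnk] at this
    exact_mod_cast congrArg (Nat.cast : ℕ → ℝ) this
  have hchoose2 : ((m + 2).choose 2 : ℝ) * 2 * (m.factorial : ℝ) = ((m + 2).factorial : ℝ) := by
    have := Nat.choose_mul_factorial_mul_factorial (show 2 ≤ m + 2 by omega)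
    have h2 : Nat.factorial 2 = 2 := rfl
    rw [h2, show m + 2 - 2 = m from rfl] at this
    exact_mod_cast congrArg (Nat.cast : ℕ → ℝ) this
  have h1 : ((j + 2).factorial : ℝ) ≠ 0 := by positivity
  have h3 : ((m - j).factorial : ℝ) ≠ 0 := by positivity
  simp only [show m + 2 - 2 = m from rfl, hnk]
  field_simp
  linear_combination π * hchoose2 - π * hchoose

lemma factor_eq (θ : ℝ) : (1 : ℂ) - Complex.exp (θ * Complex.I)
    = ((2 * Real.sin (θ/2) : ℝ) : ℂ) * Complex.exp (((θ/2 - Real.pi/2 : ℝ)) * Complex.I) := by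
  rw [show ((θ : ℂ)) * Complex.I = (θ:ℂ) * Complex.I from rfl]
  rw [Complex.exp_mul_I, Complex.exp_mul_I]
  rw [← Complex.ofReal_cos, ← Complex.ofReal_sin, ← Complex.ofReal_cos, ← Complex.ofReal_sin]
  rw [Real.cos_sub_pi_div_two, Real.sin_sub_pi_div_two]
  have h1 : Real.cos θ = 1 - 2 * Real.sin (θ/2)^2 := by
    have h := Real.cos_two_mul (θ/2)
    have h' := Real.sin_sq_add_cos_sq (θ/2)
    rw [show 2*(θ/2) = θ by ring] at h
    linarith
  have h2 : Real.sin θ = 2 * Real.sin (θ/2) * Real.cos (θ/2) := by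
    rw [← Real.sin_two_mul]; ring_nf
  rw [h1, h2]; push_cast; ring

section
variable {n k : ℕ}

lemma inner_sum_eq (hk : 2 ≤ k) (hkn : k ≤ n)
    (W : Finset (Finset (Fin n))) (hW : W ⊆ powersetCard 2 (univ : Finset (Fin n))) :
    (∑ U ∈ (Finset.powersetCard k (Finset.univ : Finset (Fin n))).powerset,
          (-1 : ℝ) ^ U.card *
            Real.cos
              (-(Real.pi * ((n - 2).factorial : ℝ) /
                  ((k.factorial : ℝ) * ((n - k).factorial : ℝ))) *
                (2 * (W.card : ℝ) - (n.choose 2 : ℝ)) +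
                4 * Real.pi / ((k : ℝ) * ((k : ℝ) - 1)) *
                  (((W ×ˢ U).filter fun p => p.1 ⊆ p.2).card : ℝ)))
      = ∏ v ∈ powersetCard k (univ : Finset (Fin n)),
          (2 * Real.sin (2 * Real.pi * ((W.filter (· ⊆ v)).card : ℝ)
            / ((k : ℝ) * ((k : ℝ) - 1)))) := by
  classical
  set K := powersetCard k (univ : Finset (Fin n)) with hK
  set A : ℝ := -(Real.pi * ((n - 2).factorial : ℝ) /
      ((k.factorial : ℝ) * ((n - k).factorial : ℝ))) with hA
  set B : ℝ := 4 * Real.pi / ((k : ℝ) * ((k : ℝ) - 1)) with hB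
  set θ : ℝ := A * (2 * (W.card : ℝ) - (n.choose 2 : ℝ)) with hθ
  set m : Finset (Fin n) → ℝ := fun v => ((W.filter (· ⊆ v)).card : ℝ) with hm
  -- Step A: rewrite each summand as a real part
  have hterm : ∀ U ∈ K.powerset,
      (-1 : ℝ) ^ U.card *
          Real.cos (θ + B * (((W ×ˢ U).filter fun p => p.1 ⊆ p.2).card : ℝ))
        = (Complex.exp ((θ : ℝ) * Complex.I) *
            ∏ v ∈ U, (-(Complex.exp (((B * m v : ℝ)) * Complex.I)))).re := by
    intro U hU
    have hcnt : (((W ×ˢ U).filter fun p => p.1 ⊆ p.2).card : ℝ) = ∑ v ∈ U, m v := by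
      rw [cardA]; push_cast; rfl
    have hprod : (∏ v ∈ U, (-(Complex.exp (((B * m v : ℝ)) * Complex.I))))
        = ((((-1 : ℝ) ^ U.card : ℝ)) : ℂ) *
            Complex.exp (((∑ v ∈ U, B * m v : ℝ)) * Complex.I) := by
      calc (∏ v ∈ U, (-(Complex.exp (((B * m v : ℝ)) * Complex.I))))
          = ∏ v ∈ U, ((-1 : ℂ) * Complex.exp (((B * m v : ℝ)) * Complex.I)) := by
            exact Finset.prod_congr rfl fun v _ => (neg_one_mul _).symm
        _ = (-1 : ℂ) ^ U.card * ∏ v ∈ U, Complex.exp (((B * m v : ℝ)) * Complex.I) := by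
            rw [Finset.prod_mul_distrib, Finset.prod_const]
        _ = (-1 : ℂ) ^ U.card * Complex.exp (∑ v ∈ U, ((B * m v : ℝ) : ℂ) * Complex.I) := by
            rw [Complex.exp_sum]
        _ = ((((-1 : ℝ) ^ U.card : ℝ)) : ℂ) *
              Complex.exp (((∑ v ∈ U, B * m v : ℝ)) * Complex.I) := by
            push_cast
            rw [Finset.sum_mul]
    rw [hprod, ← mul_assoc, mul_comm (Complex.exp _) _, mul_assoc,
      ← Complex.exp_add]
    rw [show ((θ : ℝ) : ℂ) * Complex.I + ((∑ v ∈ U, B * m v : ℝ) : ℂ) * Complex.I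
        = ((θ + ∑ v ∈ U, B * m v : ℝ) : ℂ) * Complex.I by push_cast; ring]
    rw [Complex.re_ofReal_mul, Complex.exp_ofReal_mul_I_re]
    rw [hcnt, Finset.mul_sum]
  rw [Finset.sum_congr rfl hterm, ← Complex.re_sum, ← Finset.mul_sum]
  -- Step B: sum over subsets = product
  have hps : ∑ U ∈ K.powerset, ∏ v ∈ U, (-(Complex.exp (((B * m v : ℝ)) * Complex.I)))
      = ∏ v ∈ K, ((1 : ℂ) - Complex.exp (((B * m v : ℝ)) * Complex.I)) := by
    have h := Finset.prod_add (fun v => -(Complex.exp (((B * m v : ℝ)) * Complex.I)))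
      (fun _ => (1 : ℂ)) K
    simp only [Finset.prod_const_one, mul_one] at h
    rw [← h]
    exact Finset.prod_congr rfl fun v _ => by ring
  rw [hps]
  -- Step C: factor each term
  have hfac : ∀ v ∈ K, (1 : ℂ) - Complex.exp (((B * m v : ℝ)) * Complex.I)
      = ((2 * Real.sin (B * m v / 2) : ℝ) : ℂ) *
          Complex.exp (((B * m v / 2 - Real.pi / 2 : ℝ)) * Complex.I) :=
    fun v _ => factor_eq (B * m v)
  rw [Finset.prod_congr rfl hfac, Finset.prod_mul_distrib]
  have hexp : ∏ v ∈ K, Complex.exp (((B * m v / 2 - Real.pi / 2 : ℝ)) * Complex.I)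
      = Complex.exp (((∑ v ∈ K, (B * m v / 2 - Real.pi / 2) : ℝ)) * Complex.I) := by
    have hc : ((∑ v ∈ K, (B * m v / 2 - Real.pi / 2) : ℝ) : ℂ) * Complex.I
        = ∑ v ∈ K, (((B * m v / 2 - Real.pi / 2 : ℝ) : ℂ) * Complex.I) := by
      push_cast
      rw [Finset.sum_mul]
    rw [hc, Complex.exp_sum]
  rw [hexp]
  -- Step D: the phase vanishes
  have hphase : θ + ∑ v ∈ K, (B * m v / 2 - Real.pi / 2) = 0 := by
    rw [Finset.sum_sub_distrib, Finset.sum_const, hK, Finset.card_powersetCard,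
      Finset.card_univ, Fintype.card_fin]
    have hsum : ∑ v ∈ K, (B * m v / 2) = (B / 2) * ((W.card : ℝ) * ((n - 2).choose (k - 2) : ℝ)) := by
      have h1 : ∑ v ∈ K, (B * m v / 2) = (B / 2) * ∑ v ∈ K, m v := by
        rw [Finset.mul_sum]
        exact Finset.sum_congr rfl fun v _ => by ring
      have h2 : ∑ v ∈ K, m v = ((W.card : ℝ) * ((n - 2).choose (k - 2) : ℝ)) := by
        have hc := cardC hk hkn W hW
        rw [← hK] at hc
        calc ∑ v ∈ K, m v = ((∑ v ∈ K, (W.filter (· ⊆ v)).card : ℕ) : ℝ) := by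
              push_cast; rfl
          _ = _ := by rw [hc]; push_cast; ring
      rw [h1, h2]
    rw [hsum, nsmul_eq_mul, hθ, hA, hB]
    linear_combination (W.card : ℝ) * key1 hk hkn + key2 hk hkn
  calc (Complex.exp ((θ : ℝ) * Complex.I) *
        (((∏ v ∈ K, (2 * Real.sin (B * m v / 2) : ℝ) : ℂ)) *
          Complex.exp (((∑ v ∈ K, (B * m v / 2 - Real.pi / 2) : ℝ)) * Complex.I))).re
      = (((∏ v ∈ K, ((2 * Real.sin (B * m v / 2) : ℝ) : ℂ))) *
          Complex.exp (((θ + ∑ v ∈ K, (B * m v / 2 - Real.pi / 2) : ℝ)) * Complex.I)).re := by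
        rw [show ((θ + ∑ v ∈ K, (B * m v / 2 - Real.pi / 2) : ℝ) : ℂ) * Complex.I
            = (θ : ℝ) * Complex.I + ((∑ v ∈ K, (B * m v / 2 - Real.pi / 2) : ℝ)) * Complex.I by
          push_cast; ring]
        rw [Complex.exp_add]
        congr 1
        ring
    _ = ∏ v ∈ K, (2 * Real.sin (2 * Real.pi * ((W.filter (· ⊆ v)).card : ℝ)
          / ((k : ℝ) * ((k : ℝ) - 1)))) := by
        rw [hphase]
        simp only [Complex.ofReal_zero, zero_mul, Complex.exp_zero, mul_one]
        rw [← Complex.ofReal_prod, Complex.ofReal_re]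
        refine Finset.prod_congr rfl fun v _ => ?_
        rw [hB, hm]
        ring
end

lemma two_choose {k : ℕ} (hk : 2 ≤ k) : 2 * k.choose 2 = k * (k - 1) := by
  obtain ⟨j, rfl⟩ : ∃ j, k = j + 2 := ⟨k - 2, by omega⟩
  obtain ⟨c, hc⟩ := Nat.even_mul_succ_self (j + 1)
  rw [Nat.choose_two_right]
  have h1 : j + 2 - 1 = j + 1 := rfl
  rw [h1]
  rw [mul_comm (j + 1) (j + 1 + 1)] at hc
  have h2 : j + 1 + 1 = j + 2 := rfl
  rw [h2] at hc
  set N := (j + 2) * (j + 1) with hN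
  omega

lemma char_factor {k : ℕ} (hk : 2 ≤ k) {c : ℕ} (hc : c ≤ k.choose 2) :
    0 ≤ 2 * Real.sin (2 * Real.pi * (c : ℝ) / ((k : ℝ) * ((k : ℝ) - 1))) ∧
      (2 * Real.sin (2 * Real.pi * (c : ℝ) / ((k : ℝ) * ((k : ℝ) - 1))) = 0 ↔
        c = 0 ∨ c = k.choose 2) := by
  have hk2 : (2 : ℝ) ≤ (k : ℝ) := by exact_mod_cast hk
  have hkk : (0 : ℝ) < (k : ℝ) * ((k : ℝ) - 1) := by nlinarith
  have h2c : 2 * ((k.choose 2 : ℕ) : ℝ) = (k : ℝ) * ((k : ℝ) - 1) := by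
    have h := two_choose hk
    have h1 : (1 : ℕ) ≤ k := by omega
    calc 2 * ((k.choose 2 : ℕ) : ℝ) = ((2 * k.choose 2 : ℕ) : ℝ) := by push_cast; ring
      _ = ((k * (k - 1) : ℕ) : ℝ) := by rw [h]
      _ = (k : ℝ) * ((k : ℝ) - 1) := by push_cast [Nat.cast_sub h1]; ring
  set x := 2 * Real.pi * (c : ℝ) / ((k : ℝ) * ((k : ℝ) - 1)) with hx
  have hx0 : 0 ≤ x := div_nonneg (by positivity) hkk.le
  have hcle : (c : ℝ) ≤ ((k.choose 2 : ℕ) : ℝ) := by exact_mod_cast hc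
  have hxle : x ≤ Real.pi := by
    rw [hx, div_le_iff₀ hkk]
    nlinarith [Real.pi_pos]
  refine ⟨by nlinarith [Real.sin_nonneg_of_nonneg_of_le_pi hx0 hxle], ?_, ?_⟩
  · intro h0
    by_contra hne
    push_neg at hne
    obtain ⟨h1, h2⟩ := hne
    have hcpos : (0 : ℝ) < (c : ℝ) := by
      have := Nat.pos_of_ne_zero h1; exact_mod_cast this
    have hclt : (c : ℝ) < ((k.choose 2 : ℕ) : ℝ) := by
      exact_mod_cast lt_of_le_of_ne hc h2
    have hxpos : 0 < x := div_pos (by positivity) hkk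
    have hxlt : x < Real.pi := by
      rw [hx, div_lt_iff₀ hkk]
      nlinarith [Real.pi_pos]
    nlinarith [Real.sin_pos_of_pos_of_lt_pi hxpos hxlt]
  · rintro (rfl | rfl)
    · simp [hx]
    · have hxpi : x = Real.pi := by
        rw [hx, div_eq_iff hkk.ne']
        linear_combination Real.pi * h2c
      rw [hxpi, Real.sin_pi, mul_zero]

lemma mle {n k : ℕ} {W : Finset (Finset (Fin n))} {v : Finset (Fin n)}
    (hW : W ⊆ powersetCard 2 (univ : Finset (Fin n)))
    (hv : v ∈ powersetCard k (univ : Finset (Fin n))) :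
    (W.filter (· ⊆ v)).card ≤ k.choose 2 := by
  classical
  have hsub : W.filter (· ⊆ v) ⊆ powersetCard 2 v := by
    intro u hu
    have hu' := mem_filter.mp hu
    exact Finset.mem_powersetCard.mpr ⟨hu'.2, (Finset.mem_powersetCard.mp (hW hu'.1)).2⟩
  have := Finset.card_le_card hsub
  rwa [Finset.card_powersetCard, Finset.mem_powersetCard_univ.mp hv] at this

/-- A simple graph on `[n]` is identified with its edge set `W ⊆ C([n],2)`, and a
`k`-uniform hypergraph on `[n]` with its edge set `U ⊆ C([n],k)`.  The incidence number
`i(G,H)` is the number of pairs `(u,v) ∈ E(G) × E(H)` with `u ⊆ v`. -/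
theorem stmt_5 (n k : ℕ) (hk : 2 ≤ k) (hkn : k ≤ n) :
    diagonalRamsey k ≤ n ↔
      (∑ W ∈ (Finset.powersetCard 2 (Finset.univ : Finset (Fin n))).powerset,
        ∑ U ∈ (Finset.powersetCard k (Finset.univ : Finset (Fin n))).powerset,
          (-1 : ℝ) ^ U.card *
            Real.cos
              (-(Real.pi * ((n - 2).factorial : ℝ) /
                  ((k.factorial : ℝ) * ((n - k).factorial : ℝ))) *
                (2 * (W.card : ℝ) - (n.choose 2 : ℝ)) +
                4 * Real.pi / ((k : ℝ) * ((k : ℝ) - 1)) *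
                  (((W ×ˢ U).filter fun p => p.1 ⊆ p.2).card : ℝ))) = 0 := by
  rw [diagonalRamsey_le_iff (show 1 ≤ n by omega), ramProp_iff_bad n k hk]
  rw [Finset.sum_congr rfl (fun W hW => inner_sum_eq hk hkn W (Finset.mem_powerset.mp hW))]
  rw [Finset.sum_eq_zero_iff_of_nonneg (fun W hW => Finset.prod_nonneg fun v hv =>
    (char_factor hk (mle (Finset.mem_powerset.mp hW) hv)).1)]
  constructor
  · intro h W hW
    obtain ⟨v, hv, hz⟩ := h W (Finset.mem_powerset.mp hW)
    exact Finset.prod_eq_zero hv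
      (((char_factor hk (mle (Finset.mem_powerset.mp hW) hv)).2).mpr hz)
  · intro h W hW
    obtain ⟨v, hv, hz⟩ := Finset.prod_eq_zero_iff.mp (h W (Finset.mem_powerset.mpr hW))
    exact ⟨v, hv, ((char_factor hk (mle hW hv)).2).mp hz⟩
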